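/- arXiv:2101.03130 — 3 statements merged into one kernel-verified Lean document; each statement's English description precedes it below -/
import Mathlib

section
/- Suppose R contains ℚ (R is a ℚ-algebra). Then there exists exactly one R-linear map λ₀ : R[X_1,…,X_N] → R such that λ₀(M_{jk}(p)) = 0 for all pairs of distinct indices j, k ∈ {1,…,N} and all p ∈ R[X_1,…,X_N], and λ₀((X·X)^n) = 1 for every integer n ≥ 0. -/
open MvPolynomial

/-- The rotation generator `M_{jk} p = X_j ∂_k p − X_k ∂_j p`. -/
noncomputable def rot {R : Type*} [CommRing R] {N : ℕ} (j k : Fin N)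
    (p : MvPolynomial (Fin N) R) : MvPolynomial (Fin N) R :=
  X j * pderiv k p - X k * pderiv j p

/-- The Laplacian `Δ p = Σ_j ∂_j² p`. -/
noncomputable def lap {R : Type*} [CommRing R] {N : ℕ}
    (p : MvPolynomial (Fin N) R) : MvPolynomial (Fin N) R :=
  ∑ j, pderiv j (pderiv j p)

/-- The polynomial `X·X = X_1² + ⋯ + X_N²`. -/
noncomputable def XX (R : Type*) [CommRing R] (N : ℕ) : MvPolynomial (Fin N) R :=
  ∑ j, X j ^ 2

namespace Stmt14

variable {R : Type*} [CommRing R] {N : ℕ}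

/-- Laplacian as a linear map. -/
noncomputable def lapL : MvPolynomial (Fin N) R →ₗ[R] MvPolynomial (Fin N) R :=
  ∑ j, ((pderiv j : Derivation R _ _).toLinearMap ∘ₗ (pderiv j : Derivation R _ _).toLinearMap)

@[simp] lemma lapL_apply (p : MvPolynomial (Fin N) R) : lapL p = lap p := by
  simp [lapL, lap, LinearMap.sum_apply]

/-- Rotation generator as a linear map. -/
noncomputable def rotL (j k : Fin N) : MvPolynomial (Fin N) R →ₗ[R] MvPolynomial (Fin N) R where
  toFun p := rot j k p
  map_add' p q := by simp [rot]; ring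
  map_smul' c p := by simp [rot, smul_sub, mul_smul_comm]

@[simp] lemma rotL_apply (j k : Fin N) (p : MvPolynomial (Fin N) R) : rotL j k p = rot j k p := rfl

lemma lapL_pow_apply (m : ℕ) (p : MvPolynomial (Fin N) R) :
    (lapL ^ m) p = lap^[m] p := by
  induction m generalizing p with
  | zero => simp
  | succ m ih =>
    rw [pow_succ, Module.End.mul_apply, ih, lapL_apply, Function.iterate_succ_apply]

lemma pderiv_comm (i j : Fin N) (p : MvPolynomial (Fin N) R) :
    pderiv i (pderiv j p) = pderiv j (pderiv i p) := by
  induction p using MvPolynomial.induction_on' with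
  | add p q hp hq => simp [map_add, hp, hq]
  | monomial d r =>
    by_cases hij : i = j
    · subst hij; rfl
    · simp only [pderiv_monomial]
      have h1 : ((d - Finsupp.single j 1 : (Fin N →₀ ℕ))) i = d i := by
        rw [Finsupp.tsub_apply, Finsupp.single_apply, if_neg (fun h => hij h.symm)]; omega
      have h2 : ((d - Finsupp.single i 1 : (Fin N →₀ ℕ))) j = d j := by
        rw [Finsupp.tsub_apply, Finsupp.single_apply, if_neg hij]; omega
      have h3 : d - Finsupp.single j 1 - Finsupp.single i 1
          = d - Finsupp.single i 1 - Finsupp.single j 1 := by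
        ext a; simp only [Finsupp.tsub_apply, Finsupp.single_apply]
        split_ifs <;> omega
      rw [h1, h2, h3]; ring_nf

lemma lap_pderiv (k : Fin N) (p : MvPolynomial (Fin N) R) :
    lap (pderiv k p) = pderiv k (lap p) := by
  unfold lap
  rw [map_sum]
  exact Finset.sum_congr rfl fun i _ => by
    rw [pderiv_comm i k p, pderiv_comm i k (pderiv i p)]

lemma lap_mul_X (j : Fin N) (q : MvPolynomial (Fin N) R) :
    lap (X j * q) = pderiv j q + pderiv j q + X j * lap q := by
  classical
  have key : ∀ i : Fin N, pderiv i (pderiv i (X j * q))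
      = (if i = j then pderiv j q + pderiv j q else 0) + X j * pderiv i (pderiv i q) := by
    intro i
    by_cases h : i = j
    · subst h
      rw [pderiv_mul, pderiv_X_self, one_mul, map_add, pderiv_mul, pderiv_X_self, one_mul]
      rw [if_pos rfl]; ring
    · rw [pderiv_mul, pderiv_X_of_ne (fun hh => h hh.symm), zero_mul, zero_add,
        pderiv_mul, pderiv_X_of_ne (fun hh => h hh.symm), zero_mul, zero_add, if_neg h,
        zero_add]
  unfold lap
  rw [Finset.sum_congr rfl fun i _ => key i, Finset.sum_add_distrib,
    Finset.sum_ite_eq' Finset.univ j, if_pos (Finset.mem_univ j), ← Finset.mul_sum]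

lemma lap_sub (p q : MvPolynomial (Fin N) R) : lap (p - q) = lap p - lap q := by
  simp [lap, map_sub, Finset.sum_sub_distrib]

lemma lap_rot (j k : Fin N) (p : MvPolynomial (Fin N) R) :
    lap (rot j k p) = rot j k (lap p) := by
  unfold rot
  rw [lap_sub, lap_mul_X, lap_mul_X, lap_pderiv, lap_pderiv, pderiv_comm j k]
  ring


/-- total of a finsupp exponent over all coordinates -/
def degT (d : Fin N →₀ ℕ) : ℕ := ∑ i, d i

lemma degT_eq_degree (d : Fin N →₀ ℕ) : degT d = d.degree := by
  rw [degT, Finsupp.degree]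
  exact (Finset.sum_subset (Finset.subset_univ _)
    (fun i _ hi => Finsupp.notMem_support_iff.mp hi)).symm

lemma degT_add (a b : Fin N →₀ ℕ) : degT (a + b) = degT a + degT b := by
  simp [degT, Finsupp.add_apply, Finset.sum_add_distrib]

lemma degT_single (i : Fin N) (n : ℕ) : degT (Finsupp.single i n) = n := by
  simp [degT, Finsupp.single_apply]

lemma degT_sub_single {d : Fin N →₀ ℕ} {i : Fin N} (h : d i ≠ 0) :
    degT (d - Finsupp.single i 1) = degT d - 1 := by
  have key : (d - Finsupp.single i 1) + Finsupp.single i 1 = d := by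
    ext a
    simp only [Finsupp.add_apply, Finsupp.tsub_apply, Finsupp.single_apply]
    split_ifs with hh
    · subst hh; omega
    · omega
  have := degT_add (d - Finsupp.single i 1) (Finsupp.single i 1)
  rw [key, degT_single] at this
  omega

lemma isHom_coeff {p : MvPolynomial (Fin N) R} {n : ℕ} (h : p.IsHomogeneous n)
    {d : Fin N →₀ ℕ} (hd : coeff d p ≠ 0) : degT d = n := by
  rw [degT_eq_degree]
  by_contra hne
  exact hd (h.coeff_eq_zero hne)

lemma isHom_pderiv {p : MvPolynomial (Fin N) R} {n : ℕ} (h : p.IsHomogeneous n) (i : Fin N) :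
    (pderiv i p).IsHomogeneous (n - 1) := by
  conv_lhs => rw [p.as_sum]
  rw [map_sum]
  apply IsHomogeneous.sum
  intro d hd
  rw [pderiv_monomial]
  by_cases hdi : d i = 0
  · rw [hdi]; norm_num
    exact isHomogeneous_zero _ _ _
  · apply isHomogeneous_monomial
    rw [← degT_eq_degree, degT_sub_single hdi,
      isHom_coeff h (mem_support_iff.mp hd)]

lemma isHom_lap {p : MvPolynomial (Fin N) R} {n : ℕ} (h : p.IsHomogeneous n) :
    (lap p).IsHomogeneous (n - 2) := by
  rw [lap]
  apply IsHomogeneous.sum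
  intro j _
  have := isHom_pderiv (isHom_pderiv h j) j
  rwa [Nat.sub_sub] at this

lemma pderiv_eq_zero_of_hom_zero {p : MvPolynomial (Fin N) R} (h : p.IsHomogeneous 0)
    (i : Fin N) : pderiv i p = 0 := by
  have h0 := ((totalDegree_zero_iff_isHomogeneous _).mpr h)
  rw [totalDegree_eq_zero_iff] at h0
  conv_lhs => rw [p.as_sum]
  rw [map_sum]
  apply Finset.sum_eq_zero
  intro d hd
  rw [pderiv_monomial, h0 d hd i]
  norm_num

lemma lap_eq_zero_of_hom_le_one {p : MvPolynomial (Fin N) R} {n : ℕ}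
    (h : p.IsHomogeneous n) (hn : n ≤ 1) : lap p = 0 := by
  rw [lap]
  apply Finset.sum_eq_zero
  intro j _
  interval_cases n
  · rw [pderiv_eq_zero_of_hom_zero h j, map_zero]
  · exact pderiv_eq_zero_of_hom_zero (by simpa using isHom_pderiv h j) j


def Kc (N n : ℕ) : ℕ := ∏ t ∈ Finset.range n, 2 * (t + 1) * (N + 2 * t)

lemma Kc_pos (hN : 0 < N) (n : ℕ) : 0 < Kc N n :=
  Finset.prod_pos fun t _ => by positivity

lemma Kc_succ (n : ℕ) : Kc N (n + 1) = Kc N n * (2 * (n + 1) * (N + 2 * n)) :=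
  Finset.prod_range_succ _ n

/-- `F m p = coeff 0 (Δ^m p)` as a linear map. -/
noncomputable def F (m : ℕ) : MvPolynomial (Fin N) R →ₗ[R] R :=
  lcoeff R 0 ∘ₗ (lapL ^ m)

lemma F_zero_apply (p : MvPolynomial (Fin N) R) : F 0 p = coeff 0 p := by
  simp [F]

lemma F_succ (m : ℕ) (p : MvPolynomial (Fin N) R) : F (m + 1) p = F m (lap p) := by
  simp only [F, LinearMap.comp_apply, pow_succ, Module.End.mul_apply, lapL_apply]

lemma F_eq_zero {p : MvPolynomial (Fin N) R} {e : ℕ} (h : p.IsHomogeneous e)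
    {m : ℕ} (hm : e ≠ 2 * m) : F m p = 0 := by
  induction m generalizing p e with
  | zero =>
    rw [F_zero_apply]
    apply h.coeff_eq_zero
    rw [map_zero]
    omega
  | succ m ih =>
    rw [F_succ]
    by_cases he : e ≤ 1
    · rw [lap_eq_zero_of_hom_le_one h he, map_zero]
    · exact ih (isHom_lap h) (by omega)

lemma coeff_zero_rot (j k : Fin N) (p : MvPolynomial (Fin N) R) :
    coeff 0 (rot j k p) = 0 := by
  have : constantCoeff (rot j k p) = 0 := by
    simp [rot, map_sub, map_mul, constantCoeff_X]
  simpa [constantCoeff_eq] using this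

lemma lapIter_rot (j k : Fin N) (m : ℕ) (p : MvPolynomial (Fin N) R) :
    lap^[m] (rot j k p) = rot j k (lap^[m] p) := by
  induction m generalizing p with
  | zero => rfl
  | succ m ih =>
    rw [Function.iterate_succ_apply, Function.iterate_succ_apply, lap_rot, ih]

lemma isHom_rot {p : MvPolynomial (Fin N) R} {e : ℕ} (h : p.IsHomogeneous e) (j k : Fin N) :
    (rot j k p).IsHomogeneous e := by
  cases e with
  | zero =>
    rw [rot, pderiv_eq_zero_of_hom_zero h, pderiv_eq_zero_of_hom_zero h]
    simpa using isHomogeneous_zero (Fin N) R 0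
  | succ e =>
    have h1 : (X j * pderiv k p).IsHomogeneous (1 + e) :=
      (isHomogeneous_X _ _).mul (by simpa using isHom_pderiv h k)
    have h2 : (X k * pderiv j p).IsHomogeneous (1 + e) :=
      (isHomogeneous_X _ _).mul (by simpa using isHom_pderiv h j)
    rw [add_comm 1 e] at h1 h2
    rw [rot]
    exact h1.sub h2

lemma pderiv_XX (i : Fin N) : pderiv i (XX R N) = 2 * X i := by
  rw [XX, map_sum]
  have key : ∀ l : Fin N, pderiv i (X l ^ 2) = if l = i then (2 * X i : MvPolynomial (Fin N) R) else 0 := by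
    intro l
    by_cases h : l = i
    · subst h
      rw [pderiv_pow, pderiv_X_self, if_pos rfl]
      push_cast
      ring
    · rw [pderiv_pow, pderiv_X_of_ne h, if_neg h, mul_zero]
  rw [Finset.sum_congr rfl fun l _ => key l, Finset.sum_ite_eq' Finset.univ i,
    if_pos (Finset.mem_univ i)]

lemma pderiv_XX_pow (i : Fin N) (m : ℕ) :
    pderiv i (XX R N ^ (m + 1)) = (2 * (m + 1)) • (X i * XX R N ^ m) := by
  rw [pderiv_pow, pderiv_XX, nsmul_eq_mul]
  push_cast
  ring

lemma euler_XX_pow (m : ℕ) :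
    ∑ i, X i * pderiv i (XX R N ^ m) = (2 * m) • XX R N ^ m := by
  cases m with
  | zero => simp [pderiv_one]
  | succ m =>
    have key : ∀ i : Fin N, X i * pderiv i (XX R N ^ (m + 1))
        = (2 * (m + 1)) • (X i ^ 2 * XX R N ^ m) := by
      intro i
      rw [pderiv_XX_pow, mul_smul_comm]
      congr 1
      ring
    rw [Finset.sum_congr rfl fun i _ => key i, ← Finset.smul_sum, ← Finset.sum_mul, ← XX,
      ← pow_succ']

lemma lap_XX_pow (m : ℕ) :
    lap (XX R N ^ (m + 1)) = (2 * (m + 1) * (N + 2 * m)) • XX R N ^ m := by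
  rw [lap]
  have key : ∀ i : Fin N, pderiv i (pderiv i (XX R N ^ (m + 1)))
      = (2 * (m + 1)) • (XX R N ^ m + X i * pderiv i (XX R N ^ m)) := by
    intro i
    rw [pderiv_XX_pow, map_nsmul, pderiv_mul, pderiv_X_self, one_mul]
  rw [Finset.sum_congr rfl fun i _ => key i, ← Finset.smul_sum, Finset.sum_add_distrib,
    euler_XX_pow, Finset.sum_const, Finset.card_univ, Fintype.card_fin, ← add_nsmul, smul_smul]

lemma F_XX (n : ℕ) : F n (XX R N ^ n) = ((Kc N n : ℕ) : R) := by
  induction n with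
  | zero => simp [F_zero_apply, Kc, coeff_zero_one]
  | succ n ih =>
    rw [F_succ, lap_XX_pow, map_nsmul, ih, Kc_succ, nsmul_eq_mul]
    push_cast
    ring

lemma isHom_XX : (XX R N).IsHomogeneous 2 := by
  rw [XX]
  exact IsHomogeneous.sum _ _ _ fun j _ => isHomogeneous_X_pow j 2


section QAlg
variable [Algebra ℚ R]

/-- weight of a monomial: `c_{|d|/2} * coeff₀(Δ^{|d|/2} X^d)`. -/
noncomputable def Wt (d : Fin N →₀ ℕ) : R :=
  algebraMap ℚ R (((Kc N (degT d / 2) : ℕ) : ℚ))⁻¹ * F (degT d / 2) (monomial d (1 : R))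

/-- the spherical average functional -/
noncomputable def lam0 : MvPolynomial (Fin N) R →ₗ[R] R where
  toFun p := ∑ d ∈ p.support, coeff d p * Wt d
  map_add' p q := by
    classical
    have e1 : ∑ d ∈ (p + q).support, coeff d (p + q) * Wt d
        = ∑ d ∈ p.support ∪ q.support, coeff d (p + q) * Wt d :=
      Finset.sum_subset support_add fun d _ hd => by
        rw [notMem_support_iff.mp hd, zero_mul]
    have e2 : ∑ d ∈ p.support, coeff d p * Wt d
        = ∑ d ∈ p.support ∪ q.support, coeff d p * Wt d :=
      Finset.sum_subset Finset.subset_union_left fun d _ hd => by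
        rw [notMem_support_iff.mp hd, zero_mul]
    have e3 : ∑ d ∈ q.support, coeff d q * Wt d
        = ∑ d ∈ p.support ∪ q.support, coeff d q * Wt d :=
      Finset.sum_subset Finset.subset_union_right fun d _ hd => by
        rw [notMem_support_iff.mp hd, zero_mul]
    show ∑ d ∈ (p + q).support, coeff d (p + q) * Wt d
        = (∑ d ∈ p.support, coeff d p * Wt d) + ∑ d ∈ q.support, coeff d q * Wt d
    rw [e1, e2, e3]
    simp only [coeff_add, add_mul]
    rw [Finset.sum_add_distrib]
  map_smul' c p := by
    classical
    have e1 : ∑ d ∈ (c • p).support, coeff d (c • p) * Wt d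
        = ∑ d ∈ p.support, coeff d (c • p) * Wt d :=
      Finset.sum_subset support_smul fun d _ hd => by
        rw [notMem_support_iff.mp hd, zero_mul]
    show ∑ d ∈ (c • p).support, coeff d (c • p) * Wt d
        = (RingHom.id R) c • ∑ d ∈ p.support, coeff d p * Wt d
    rw [e1]
    simp only [coeff_smul, smul_eq_mul, RingHom.id_apply, mul_assoc, ← Finset.mul_sum]

lemma lam0_apply (p : MvPolynomial (Fin N) R) :
    lam0 p = ∑ d ∈ p.support, coeff d p * Wt d := rfl

lemma lam0_isHom {p : MvPolynomial (Fin N) R} {e : ℕ} (h : p.IsHomogeneous e) :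
    lam0 p = algebraMap ℚ R (((Kc N (e / 2) : ℕ) : ℚ))⁻¹ * F (e / 2) p := by
  rw [lam0_apply]
  have step : ∀ d ∈ p.support, coeff d p * Wt d
      = algebraMap ℚ R (((Kc N (e / 2) : ℕ) : ℚ))⁻¹ * F (e / 2) (monomial d (coeff d p)) := by
    intro d hd
    have hdeg : degT d = e := isHom_coeff h (mem_support_iff.mp hd)
    rw [Wt, hdeg]
    have hm : monomial d (coeff d p) = coeff d p • monomial d (1 : R) := by
      rw [smul_monomial, smul_eq_mul, mul_one]
    rw [hm, map_smul, smul_eq_mul]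
    ring
  rw [Finset.sum_congr rfl step, ← Finset.mul_sum, ← map_sum (F (e / 2)), ← as_sum]

lemma lam0_XX_pow (hN : 0 < N) (n : ℕ) : lam0 (XX R N ^ n) = 1 := by
  have h : (XX R N ^ n).IsHomogeneous (2 * n) := isHom_XX.pow n
  rw [lam0_isHom h, show 2 * n / 2 = n by omega, F_XX,
    show ((Kc N n : ℕ) : R) = algebraMap ℚ R ((Kc N n : ℕ) : ℚ) by rw [map_natCast],
    ← map_mul, inv_mul_cancel₀ (by exact_mod_cast (Kc_pos hN n).ne'), map_one]

lemma lam0_rot (j k : Fin N) (p : MvPolynomial (Fin N) R) : lam0 (rot j k p) = 0 := by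
  have hom_case : ∀ (e : ℕ) (q : MvPolynomial (Fin N) R), q.IsHomogeneous e →
      lam0 (rot j k q) = 0 := by
    intro e q hq
    rw [lam0_isHom (isHom_rot hq j k)]
    have hF : F (e / 2) (rot j k q) = 0 := by
      show (lcoeff R 0) ((lapL ^ (e / 2)) (rot j k q)) = 0
      rw [lapL_pow_apply, lapIter_rot]
      exact coeff_zero_rot j k _
    rw [hF, mul_zero]
  conv_lhs => rw [← sum_homogeneousComponent p, show rot j k (∑ i ∈ Finset.range (p.totalDegree + 1),
      homogeneousComponent i p) = ∑ i ∈ Finset.range (p.totalDegree + 1),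
      rot j k (homogeneousComponent i p) by rw [← rotL_apply, map_sum]; simp only [rotL_apply]]
  rw [map_sum]
  exact Finset.sum_eq_zero fun i _ =>
    hom_case i _ (homogeneousComponent_isHomogeneous i p)

end QAlg


section Uniq
set_option linter.unusedSectionVars false
variable [Algebra ℚ R]

lemma mu_monomial (μ : MvPolynomial (Fin N) R →ₗ[R] R) (d : Fin N →₀ ℕ) (r : R) :
    μ (monomial d r) = r * μ (monomial d 1) := by
  rw [show (monomial d r : MvPolynomial (Fin N) R) = r • monomial d (1 : R) by
    rw [smul_monomial, smul_eq_mul, mul_one], map_smul, smul_eq_mul]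

lemma nat_cancel {n : ℕ} (hn : n ≠ 0) {r : R} (h : (n : R) * r = 0) : r = 0 := by
  have h2 : algebraMap ℚ R ((n : ℚ))⁻¹ * ((n : R) * r) = r := by
    rw [show ((n : R)) = algebraMap ℚ R (n : ℚ) from (map_natCast _ _).symm, ← mul_assoc,
      ← map_mul, inv_mul_cancel₀ (by exact_mod_cast hn), map_one, one_mul]
  rw [← h2, h, mul_zero]

lemma rot_monomial (j k : Fin N) (d : Fin N →₀ ℕ) :
    rot j k (monomial d (1 : R))
      = monomial (Finsupp.single j 1 + (d - Finsupp.single k 1)) ((d k : ℕ) : R)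
        - monomial (Finsupp.single k 1 + (d - Finsupp.single j 1)) ((d j : ℕ) : R) := by
  rw [rot, pderiv_monomial, pderiv_monomial, one_mul, one_mul,
    show (X j : MvPolynomial (Fin N) R) = monomial (Finsupp.single j 1) 1 from rfl,
    show (X k : MvPolynomial (Fin N) R) = monomial (Finsupp.single k 1) 1 from rfl,
    monomial_mul, monomial_mul, one_mul, one_mul]

lemma rel (μ : MvPolynomial (Fin N) R →ₗ[R] R)
    (hrot : ∀ j k : Fin N, j ≠ k → ∀ p, μ (rot j k p) = 0)
    {j k : Fin N} (hjk : j ≠ k) (d : Fin N →₀ ℕ) :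
    ((d k : ℕ) : R) * μ (monomial (Finsupp.single j 1 + (d - Finsupp.single k 1)) 1)
      = ((d j : ℕ) : R) * μ (monomial (Finsupp.single k 1 + (d - Finsupp.single j 1)) 1) := by
  have h0 := hrot j k hjk (monomial d 1)
  rw [rot_monomial, map_sub,
    mu_monomial μ (Finsupp.single j 1 + (d - Finsupp.single k 1)) ((d k : ℕ) : R),
    mu_monomial μ (Finsupp.single k 1 + (d - Finsupp.single j 1)) ((d j : ℕ) : R),
    sub_eq_zero] at h0
  exact h0

lemma tsub_single_add {d : Fin N →₀ ℕ} {i : Fin N} (h : d i ≠ 0) :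
    d - Finsupp.single i 1 + Finsupp.single i 1 = d := by
  ext a
  simp only [Finsupp.add_apply, Finsupp.tsub_apply, Finsupp.single_apply]
  split_ifs with hh
  · subst hh; omega
  · omega

lemma rel' (μ : MvPolynomial (Fin N) R →ₗ[R] R)
    (hrot : ∀ j k : Fin N, j ≠ k → ∀ p, μ (rot j k p) = 0)
    {j k : Fin N} (hjk : j ≠ k) (b : Fin N →₀ ℕ) :
    ((b k + 1 : ℕ) : R) * μ (monomial (b + Finsupp.single j 1) 1)
      = ((b j : ℕ) : R) *
        μ (monomial (Finsupp.single k 1 + (b + Finsupp.single k 1 - Finsupp.single j 1)) 1) := by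
  have h0 := rel μ hrot hjk (b + Finsupp.single k 1)
  have e1 : (b + Finsupp.single k 1 : Fin N →₀ ℕ) k = b k + 1 := by
    simp [Finsupp.add_apply, Finsupp.single_apply]
  have e2 : (b + Finsupp.single k 1 : Fin N →₀ ℕ) j = b j := by
    simp [Finsupp.add_apply, Finsupp.single_apply, Ne.symm hjk]
  have e3 : b + Finsupp.single k 1 - Finsupp.single k 1 = b := add_tsub_cancel_right _ _
  rw [e1, e2, e3, add_comm (Finsupp.single j 1) b] at h0
  exact h0

lemma odd_kill (μ : MvPolynomial (Fin N) R →ₗ[R] R)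
    (hrot : ∀ j k : Fin N, j ≠ k → ∀ p, μ (rot j k p) = 0) (hN : 2 ≤ N) :
    ∀ (n : ℕ) (d : Fin N →₀ ℕ) (j : Fin N), d j = 2 * n + 1 → μ (monomial d 1) = 0 := by
  have : Nontrivial (Fin N) := Fin.nontrivial_iff_two_le.mpr hN
  intro n
  induction n with
  | zero =>
    intro d j hdj
    obtain ⟨k, hk⟩ := exists_ne j
    have hjk : j ≠ k := fun h => hk h.symm
    have hrel := rel' μ hrot hjk (d - Finsupp.single j 1)
    have hb : d - Finsupp.single j 1 + Finsupp.single j 1 = d := tsub_single_add (by omega)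
    have hbj : (d - Finsupp.single j 1 : Fin N →₀ ℕ) j = 0 := by
      rw [Finsupp.tsub_apply, Finsupp.single_eq_same]
      omega
    rw [hb, hbj, Nat.cast_zero, zero_mul] at hrel
    exact nat_cancel (Nat.succ_ne_zero _) hrel
  | succ n ih =>
    intro d j hdj
    obtain ⟨k, hk⟩ := exists_ne j
    have hjk : j ≠ k := fun h => hk h.symm
    have hrel := rel' μ hrot hjk (d - Finsupp.single j 1)
    have hb : d - Finsupp.single j 1 + Finsupp.single j 1 = d := tsub_single_add (by omega)
    rw [hb] at hrel
    set d' := Finsupp.single k 1 +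
      (d - Finsupp.single j 1 + Finsupp.single k 1 - Finsupp.single j 1) with hd'
    have hd'j : d' j = 2 * n + 1 := by
      rw [hd', Finsupp.add_apply, Finsupp.tsub_apply, Finsupp.add_apply, Finsupp.tsub_apply,
        Finsupp.single_eq_same, Finsupp.single_apply, if_neg (show ¬ k = j from hk)]
      omega
    rw [ih d' j hd'j, mul_zero] at hrel
    exact nat_cancel (Nat.succ_ne_zero _) hrel

end Uniq


section Uniq2
set_option linter.unusedSectionVars false
variable [Algebra ℚ R]

lemma solve_smul {a b : ℕ} (ha : a ≠ 0) {q : ℚ} {x y : R}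
    (h : ((a : ℕ) : R) * x = ((b : ℕ) : R) * (q • y)) :
    x = (((a : ℚ))⁻¹ * ((b : ℚ) * q)) • y := by
  have hx : x = algebraMap ℚ R ((a : ℚ))⁻¹ * (((a : ℕ) : R) * x) := by
    rw [show (((a : ℕ)) : R) = algebraMap ℚ R (a : ℚ) from (map_natCast _ _).symm, ← mul_assoc,
      ← map_mul, inv_mul_cancel₀ (by exact_mod_cast ha), map_one, one_mul]
  rw [hx, h, show (((b : ℕ)) : R) = algebraMap ℚ R (b : ℚ) from (map_natCast _ _).symm,
    Algebra.smul_def q y, Algebra.smul_def (((a : ℚ))⁻¹ * ((b : ℚ) * q)) y, map_mul, map_mul]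
  ring

lemma swap2_apply (d : Fin N →₀ ℕ) {j k : Fin N} (hjk : j ≠ k) (hdj : 2 ≤ d j) (a : Fin N) :
    (Finsupp.single k 1 +
      (d - Finsupp.single j 1 + Finsupp.single k 1 - Finsupp.single j 1) : Fin N →₀ ℕ) a
      = if a = j then d a - 2 else if a = k then d a + 2 else d a := by
  simp only [Finsupp.add_apply, Finsupp.tsub_apply, Finsupp.single_apply]
  rcases eq_or_ne a j with rfl | haj
  · rw [if_neg (Ne.symm hjk), if_pos rfl, if_pos rfl]
    omega
  · rcases eq_or_ne a k with rfl | hak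
    · rw [if_pos rfl, if_neg hjk, if_neg haj, if_pos rfl]
      omega
    · rw [if_neg (fun h => hak h.symm), if_neg (fun h => haj h.symm), if_neg haj, if_neg hak]
      omega

lemma le_degT (d : Fin N →₀ ℕ) (j : Fin N) : d j ≤ degT d :=
  Finset.single_le_sum (f := fun i => d i) (fun _ _ => Nat.zero_le _) (Finset.mem_univ j)

lemma even_red (μ : MvPolynomial (Fin N) R →ₗ[R] R)
    (hrot : ∀ j k : Fin N, j ≠ k → ∀ p, μ (rot j k p) = 0) (i0 : Fin N) :
    ∀ (s : ℕ) (d : Fin N →₀ ℕ), degT d - d i0 = s → (∀ i, Even (d i)) →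
      ∃ q : ℚ, 0 < q ∧
        μ (monomial d 1) = q • μ (monomial (Finsupp.single i0 (degT d)) 1) := by
  intro s
  induction s using Nat.strong_induction_on with
  | _ s ih =>
    intro d hs hev
    have hle : d i0 ≤ degT d := le_degT d i0
    have hdegT : degT d = ∑ i, d i := rfl
    have herase : (∑ i ∈ Finset.univ.erase i0, d i) + d i0 = ∑ i, d i :=
      Finset.sum_erase_add Finset.univ (fun i => d i) (Finset.mem_univ i0)
    by_cases h0 : s = 0
    · subst h0
      have hsum : ∑ i ∈ Finset.univ.erase i0, d i = 0 := by omega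
      have hd : d = Finsupp.single i0 (degT d) := by
        ext a
        rcases eq_or_ne a i0 with rfl | ha
        · rw [Finsupp.single_eq_same]; omega
        · rw [Finsupp.single_apply, if_neg (fun h => ha h.symm)]
          exact Finset.sum_eq_zero_iff.mp hsum a (Finset.mem_erase.mpr ⟨ha, Finset.mem_univ a⟩)
      exact ⟨1, one_pos, by rw [← hd, one_smul]⟩
    · have hpos : 0 < s := Nat.pos_of_ne_zero h0
      have hne0 : (∑ i ∈ Finset.univ.erase i0, d i) ≠ 0 := by omega
      obtain ⟨j, hjmem, hjne⟩ := Finset.exists_ne_zero_of_sum_ne_zero hne0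
      have hji0 : j ≠ i0 := (Finset.mem_erase.mp hjmem).1
      have hdj2 : 2 ≤ d j := by
        obtain ⟨t, ht⟩ := hev j; omega
      have hrel := rel' μ hrot hji0 (d - Finsupp.single j 1)
      rw [tsub_single_add (by omega)] at hrel
      have coordA : (d - Finsupp.single j 1 : Fin N →₀ ℕ) i0 = d i0 := by
        rw [Finsupp.tsub_apply, Finsupp.single_apply, if_neg hji0]
        omega
      have coordB : (d - Finsupp.single j 1 : Fin N →₀ ℕ) j = d j - 1 := by
        rw [Finsupp.tsub_apply, Finsupp.single_eq_same]
      rw [coordA, coordB] at hrel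
      set d'' := Finsupp.single i0 1 +
        (d - Finsupp.single j 1 + Finsupp.single i0 1 - Finsupp.single j 1) with hd''
      have hcoord := swap2_apply d hji0 hdj2
      have hd''i0 : d'' i0 = d i0 + 2 := by
        rw [hd'', hcoord i0, if_neg (Ne.symm hji0), if_pos rfl]
      have hd''j : d'' j = d j - 2 := by
        rw [hd'', hcoord j, if_pos rfl]
      have hev'' : ∀ i, Even (d'' i) := by
        intro i
        rw [hd'', hcoord i]
        obtain ⟨t, ht⟩ := hev i
        split_ifs
        · exact ⟨t - 1, by omega⟩
        · exact ⟨t + 1, by omega⟩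
        · exact ⟨t, ht⟩
      -- degT d'' = degT d
      have hbj' : (d - Finsupp.single j 1 + Finsupp.single i0 1 : Fin N →₀ ℕ) j ≠ 0 := by
        rw [Finsupp.add_apply, coordB, Finsupp.single_apply, if_neg (Ne.symm hji0)]
        omega
      have hdeg : degT d'' = degT d := by
        rw [hd'', degT_add, degT_sub_single hbj', degT_add, degT_sub_single (by omega : d j ≠ 0),
          degT_single]
        have := le_degT d j
        omega
      have hmeas : degT d'' - d'' i0 < s := by
        rw [hdeg, hd''i0]
        omega
      obtain ⟨q, hq, hmd⟩ := ih _ hmeas d'' rfl hev''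
      rw [hdeg] at hmd
      rw [hmd] at hrel
      refine ⟨((d i0 + 1 : ℚ))⁻¹ * ((d j - 1 : ℕ) * q), ?_, ?_⟩
      · have h1 : (0 : ℚ) < ((d i0 + 1 : ℚ))⁻¹ := by positivity
        have h2 : (0 : ℚ) < ((d j - 1 : ℕ) : ℚ) := by
          have : 1 ≤ d j - 1 := by omega
          exact_mod_cast Nat.lt_of_lt_of_le Nat.zero_lt_one this
        positivity
      · have := solve_smul (a := d i0 + 1) (b := d j - 1)
          (Nat.succ_ne_zero _) (x := μ (monomial d 1))
          (y := μ (monomial (Finsupp.single i0 (degT d)) 1)) (q := q) ?_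
        · convert this using 2
          push_cast
          ring
        · exact_mod_cast hrel
      
end Uniq2


section Uniq3
set_option linter.unusedSectionVars false
variable [Algebra ℚ R]

lemma XX_map : (XX R N) = MvPolynomial.map (algebraMap ℚ R) (XX ℚ N) := by
  rw [XX, XX, map_sum]
  exact Finset.sum_congr rfl fun j _ => by rw [map_pow, map_X]

lemma coeff_XXQ_nonneg0 (d : Fin N →₀ ℕ) : 0 ≤ coeff d (XX ℚ N) := by
  classical
  rw [XX, coeff_sum]
  apply Finset.sum_nonneg
  intro j _
  rw [X_pow_eq_monomial, coeff_monomial]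
  split_ifs <;> norm_num

lemma coeff_XXQ_nonneg (n : ℕ) (d : Fin N →₀ ℕ) : 0 ≤ coeff d (XX ℚ N ^ n) := by
  induction n generalizing d with
  | zero =>
    classical
    rw [pow_zero, coeff_one]
    split_ifs <;> norm_num
  | succ n ih =>
    rw [pow_succ, coeff_mul]
    apply Finset.sum_nonneg
    intro x _
    exact mul_nonneg (ih x.1) (coeff_XXQ_nonneg0 x.2)

lemma single_tsub_single (i0 : Fin N) (n : ℕ) :
    Finsupp.single i0 (2 * (n + 1)) - Finsupp.single i0 2 = Finsupp.single i0 (2 * n) := by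
  ext a
  simp only [Finsupp.tsub_apply, Finsupp.single_apply]
  split_ifs <;> omega

lemma coeff_XXQ_single (i0 : Fin N) (n : ℕ) :
    coeff (Finsupp.single i0 (2 * n)) (XX ℚ N ^ n) = 1 := by
  induction n with
  | zero =>
    rw [pow_zero, mul_zero, Finsupp.single_zero, coeff_zero_one]
  | succ n ih =>
    rw [pow_succ',
      show XX ℚ N * XX ℚ N ^ n = ∑ j : Fin N, X j ^ 2 * XX ℚ N ^ n from by
        rw [← Finset.sum_mul, ← XX], coeff_sum]
    have key : ∀ j : Fin N, coeff (Finsupp.single i0 (2 * (n + 1))) (X j ^ 2 * XX ℚ N ^ n)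
        = if j = i0 then 1 else 0 := by
      intro j
      rw [X_pow_eq_monomial, coeff_monomial_mul']
      by_cases hj : j = i0
      · subst hj
        rw [if_pos (Finsupp.single_le_iff.mpr (by rw [Finsupp.single_eq_same]; omega)),
          if_pos rfl, single_tsub_single, ih, one_mul]
      · rw [if_neg, if_neg hj]
        rw [Finsupp.single_le_iff, Finsupp.single_apply, if_neg (fun h => hj h.symm)]
        omega
    rw [Finset.sum_congr rfl fun j _ => key j, Finset.sum_ite_eq' Finset.univ i0,
      if_pos (Finset.mem_univ i0)]

lemma M_zero (μ : MvPolynomial (Fin N) R →ₗ[R] R)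
    (hrot : ∀ j k : Fin N, j ≠ k → ∀ p, μ (rot j k p) = 0)
    (hXX : ∀ n : ℕ, μ (XX R N ^ n) = 0) (hN : 2 ≤ N) (i0 : Fin N) (n : ℕ) :
    μ (monomial (Finsupp.single i0 (2 * n)) 1) = 0 := by
  classical
  set M := μ (monomial (Finsupp.single i0 (2 * n)) 1) with hM
  set Q := XX ℚ N ^ n with hQ
  have hhom : Q.IsHomogeneous (2 * n) := isHom_XX.pow n
  have hexp : (XX R N ^ n : MvPolynomial (Fin N) R)
      = ∑ d ∈ Q.support, monomial d (algebraMap ℚ R (coeff d Q)) := by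
    rw [XX_map, ← map_pow, ← hQ]
    conv_lhs => rw [Q.as_sum]
    rw [map_sum]
    exact Finset.sum_congr rfl fun d _ => map_monomial _ _ _
  have hmu : μ (XX R N ^ n)
      = ∑ d ∈ Q.support, algebraMap ℚ R (coeff d Q) * μ (monomial d 1) := by
    rw [hexp, map_sum]
    exact Finset.sum_congr rfl fun d _ => mu_monomial μ d _
  have key : ∀ d : Fin N →₀ ℕ, ∃ t : ℚ, 0 ≤ t ∧
      (d ∈ Q.support → algebraMap ℚ R (coeff d Q) * μ (monomial d 1) = t • M) ∧
      (d = Finsupp.single i0 (2 * n) → 0 < t) := by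
    intro d
    by_cases hc : coeff d Q = 0
    · refine ⟨0, le_refl _, fun hd => absurd hc (mem_support_iff.mp hd), fun hdd => ?_⟩
      exfalso
      rw [hdd, hQ, coeff_XXQ_single] at hc
      exact one_ne_zero hc
    · have hcpos : 0 < coeff d Q := lt_of_le_of_ne (coeff_XXQ_nonneg n d) (Ne.symm hc)
      have hdeg : degT d = 2 * n := isHom_coeff hhom hc
      by_cases hev : ∀ i, Even (d i)
      · obtain ⟨q, hqpos, hmd⟩ := even_red μ hrot i0 (degT d - d i0) d rfl hev
        rw [hdeg] at hmd
        refine ⟨coeff d Q * q, by positivity, fun _ => ?_, fun _ => by positivity⟩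
        rw [hmd, ← hM, Algebra.smul_def, Algebra.smul_def, map_mul]
        ring
      · push_neg at hev
        obtain ⟨i, hi⟩ := hev
        have hodd : d i = 2 * (d i / 2) + 1 := by
          have := Nat.not_even_iff.mp hi
          omega
        refine ⟨0, le_refl _, fun _ => ?_, fun hdd => ?_⟩
        · rw [odd_kill μ hrot hN (d i / 2) d i hodd, mul_zero, zero_smul]
        · exfalso
          apply hi
          rw [hdd, Finsupp.single_apply]
          split_ifs
          · exact ⟨n, by omega⟩
          · exact Even.zero
  choose tf ht0 hteq htpos using key
  have hsum : μ (XX R N ^ n) = (∑ d ∈ Q.support, tf d) • M := by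
    rw [hmu, Finset.sum_smul]
    exact Finset.sum_congr rfl fun d hd => hteq d hd
  have hmemd0 : Finsupp.single i0 (2 * n) ∈ Q.support := by
    rw [mem_support_iff, hQ, coeff_XXQ_single]
    exact one_ne_zero
  have hTpos : 0 < ∑ d ∈ Q.support, tf d :=
    lt_of_lt_of_le (htpos _ rfl) (Finset.single_le_sum (fun d _ => ht0 d) hmemd0)
  have h0 : (∑ d ∈ Q.support, tf d) • M = 0 := by rw [← hsum, hXX n]
  have := congrArg (fun x : R => (∑ d ∈ Q.support, tf d)⁻¹ • x) h0
  simpa [smul_smul, inv_mul_cancel₀ hTpos.ne'] using this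

lemma mu_eq_zero (μ : MvPolynomial (Fin N) R →ₗ[R] R)
    (hrot : ∀ j k : Fin N, j ≠ k → ∀ p, μ (rot j k p) = 0)
    (hXX : ∀ n : ℕ, μ (XX R N ^ n) = 0) (hN : 2 ≤ N) : μ = 0 := by
  have hNpos : 0 < N := by omega
  set i0 : Fin N := ⟨0, hNpos⟩ with hi0
  have hmono : ∀ d : Fin N →₀ ℕ, μ (monomial d 1) = 0 := by
    intro d
    by_cases hev : ∀ i, Even (d i)
    · obtain ⟨q, hqpos, hmd⟩ := even_red μ hrot i0 (degT d - d i0) d rfl hev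
      have hevT : Even (degT d) := Finset.even_sum _ fun i _ => hev i
      obtain ⟨t, ht⟩ := hevT
      rw [hmd, show degT d = 2 * t by omega, M_zero μ hrot hXX hN i0 t, smul_zero]
    · push_neg at hev
      obtain ⟨i, hi⟩ := hev
      have hodd : d i = 2 * (d i / 2) + 1 := by
        have := Nat.not_even_iff.mp hi
        omega
      exact odd_kill μ hrot hN (d i / 2) d i hodd
  apply LinearMap.ext
  intro p
  rw [LinearMap.zero_apply]
  induction p using MvPolynomial.induction_on' with
  | monomial d r => rw [mu_monomial, hmono d, mul_zero]
  | add p q hp hq => rw [map_add, hp, hq, add_zero]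

end Uniq3

end Stmt14



/-- over a ℚ-algebra there is a unique `R`-linear map
`λ₀ : R[X_1,…,X_N] → R` vanishing on every `M_{jk} p` and with `λ₀((X·X)^n) = 1`
for all `n ≥ 0`. -/
theorem stmt14 {R : Type*} [CommRing R] [Algebra ℚ R] {N : ℕ} (hN : 2 ≤ N) :
    ∃! lam : MvPolynomial (Fin N) R →ₗ[R] R,
      (∀ (j k : Fin N), j ≠ k → ∀ p, lam (rot j k p) = 0) ∧
      (∀ n : ℕ, lam (XX R N ^ n) = 1) := by
  have hNpos : 0 < N := by omega
  refine ⟨Stmt14.lam0, ⟨fun j k _ p => Stmt14.lam0_rot j k p,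
    fun n => Stmt14.lam0_XX_pow hNpos n⟩, ?_⟩
  rintro lam ⟨hrotlam, hXXlam⟩
  set μ : MvPolynomial (Fin N) R →ₗ[R] R := lam - Stmt14.lam0 with hμ
  have hrotμ : ∀ j k : Fin N, j ≠ k → ∀ p : MvPolynomial (Fin N) R,
      μ (rot j k p) = 0 := fun j k hjk p => by
    rw [hμ, LinearMap.sub_apply, hrotlam j k hjk p, Stmt14.lam0_rot j k p, sub_zero]
  have hXXμ : ∀ n : ℕ, μ (XX R N ^ n) = 0 := fun n => by
    rw [hμ, LinearMap.sub_apply, hXXlam n, Stmt14.lam0_XX_pow hNpos n, sub_self]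
  have h0 : μ = 0 := Stmt14.mu_eq_zero _ hrotμ hXXμ hN
  rw [hμ] at h0
  exact sub_eq_zero.mp h0
end

section
/- Suppose R contains ℚ (R is a ℚ-algebra) and let λ : R[X_1,…,X_N] → R be an R-linear map such that λ(M_{jk}(p)) = 0 for all pairs of distinct indices j, k ∈ {1,…,N} and all p, and λ((X·X)^n) = 1 for every integer n ≥ 0. If p ∈ R[X_1,…,X_N] is harmonic (Δp = 0), then λ(p) equals the value of p at the origin, i.e., λ(p) is the constant coefficient of p. -/
open MvPolynomial

section Aux

variable {R : Type*} [CommRing R] {N : ℕ}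

lemma degree_eq_sum (s : Fin N →₀ ℕ) : s.degree = ∑ k, s k := by
  unfold Finsupp.degree
  exact Finset.sum_subset (Finset.subset_univ _)
    (fun x _ hx => Finsupp.notMem_support_iff.mp hx)

lemma X_mul_pderiv_monomial (k : Fin N) (s : Fin N →₀ ℕ) (a : R) :
    X k * pderiv k (monomial s a) = monomial s (a * s k) := by
  rw [pderiv_monomial]
  rcases Nat.eq_zero_or_pos (s k) with h | h
  · simp [h]
  · have hexp : Finsupp.single k 1 + (s - Finsupp.single k 1) = s := by
      ext i
      rw [Finsupp.add_apply, Finsupp.tsub_apply, Finsupp.single_apply]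
      rcases eq_or_ne k i with rfl | hik
      · simp only [if_pos rfl]; simp only [if_true]; omega
      · simp [if_neg hik]
    rw [X, monomial_mul, one_mul, hexp]

lemma euler_monomial (s : Fin N →₀ ℕ) (a : R) :
    ∑ k, X k * pderiv k (monomial s a) = s.degree • monomial s a := by
  simp only [_root_.X_mul_pderiv_monomial]
  rw [degree_eq_sum, Finset.sum_smul]
  exact Finset.sum_congr rfl fun k _ => by
    rw [← map_nsmul (monomial s), nsmul_eq_mul, mul_comm]

lemma euler_homog {p : MvPolynomial (Fin N) R} {n : ℕ} (hp : p.IsHomogeneous n) :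
    ∑ k, X k * pderiv k p = n • p := by
  conv_lhs => rw [p.as_sum]
  conv_rhs => rw [p.as_sum]
  rw [Finset.smul_sum]
  simp only [map_sum, Finset.mul_sum]
  rw [Finset.sum_comm]
  refine Finset.sum_congr rfl fun s hs => ?_
  rw [euler_monomial]
  congr 1
  have := hp (mem_support_iff.mp hs)
  rw [Finsupp.degree_eq_weight_one]
  exact this

lemma pderiv_isHomog {p : MvPolynomial (Fin N) R} {n : ℕ} (hp : p.IsHomogeneous n) (j : Fin N) :
    (pderiv j p).IsHomogeneous (n - 1) := by
  conv_lhs => rw [p.as_sum]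
  rw [map_sum]
  refine IsHomogeneous.sum _ _ _ fun s hs => ?_
  rw [pderiv_monomial]
  rcases Nat.eq_zero_or_pos (s j) with h | h
  · simp only [h, Nat.cast_zero, mul_zero, map_zero]
    exact isHomogeneous_zero _ _ _
  · refine isHomogeneous_monomial _ ?_
    have hdeg : s.degree = n := by
      rw [Finsupp.degree_eq_weight_one]; exact hp (mem_support_iff.mp hs)
    rw [degree_eq_sum] at hdeg ⊢
    rw [← Finset.add_sum_erase _ _ (Finset.mem_univ j)] at hdeg ⊢
    rw [Finset.sum_congr rfl (fun i hi => show ((s - Finsupp.single j 1 : Fin N →₀ ℕ)) i = s i by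
      rw [Finsupp.tsub_apply, Finsupp.single_apply,
        if_neg (Finset.ne_of_mem_erase hi).symm]; omega)]
    rw [show ((s - Finsupp.single j 1 : Fin N →₀ ℕ)) j = s j - 1 by
      rw [Finsupp.tsub_apply, Finsupp.single_apply, if_pos rfl]]
    show s j - 1 + ∑ x ∈ Finset.univ.erase j, s x = n - 1
    omega

lemma pderiv_homog_zero {p : MvPolynomial (Fin N) R} (hp : p.IsHomogeneous 0) (j : Fin N) :
    pderiv j p = 0 := by
  conv_lhs => rw [p.as_sum]
  rw [map_sum]
  refine Finset.sum_eq_zero fun s hs => ?_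
  have hs0 : s = 0 := by
    rw [← Finsupp.degree_eq_zero_iff, Finsupp.degree_eq_weight_one]
    exact hp (mem_support_iff.mp hs)
  subst hs0
  simp

lemma rot_sum (j : Fin N) (w : MvPolynomial (Fin N) R) :
    ∑ k, rot j k (X k * w)
      = N • (X j * w) + X j * (∑ k, X k * pderiv k w)
        - X j * w - XX R N * pderiv j w := by
  have hterm : ∀ k, rot j k (X k * w)
      = (X j * w + X j * (X k * pderiv k w))
        - ((if k = j then X k * w else 0) + X k ^ 2 * pderiv j w) := by
    intro k
    unfold rot
    rw [pderiv_mul (i := k), pderiv_mul (i := j), pderiv_X_self]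
    rcases eq_or_ne k j with rfl | hkj
    · rw [if_pos rfl, pderiv_X_self]; ring
    · rw [if_neg hkj, pderiv_X_of_ne hkj]; ring
  rw [Finset.sum_congr rfl fun k _ => hterm k, Finset.sum_sub_distrib,
    Finset.sum_add_distrib, Finset.sum_add_distrib, Finset.sum_const,
    Finset.card_univ, Fintype.card_fin, ← Finset.mul_sum,
    Finset.sum_ite_eq' Finset.univ j (fun k => X k * w), if_pos (Finset.mem_univ j)]
  unfold XX
  rw [Finset.sum_mul]
  ring_nf
  congr 1
  exact Finset.sum_congr rfl fun _ _ => mul_comm _ _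

lemma lap_sum {ι : Type*} (s : Finset ι) (f : ι → MvPolynomial (Fin N) R) :
    lap (∑ i ∈ s, f i) = ∑ i ∈ s, lap (f i) := by
  unfold lap
  simp only [map_sum]
  exact Finset.sum_comm

lemma lap_homog {q : MvPolynomial (Fin N) R} {d : ℕ} (hq : q.IsHomogeneous d) :
    (lap q).IsHomogeneous (d - 2) := by
  refine IsHomogeneous.sum _ _ _ fun j _ => ?_
  have := pderiv_isHomog (pderiv_isHomog hq j) j
  rwa [Nat.sub_sub] at this

lemma lap_lowdeg {q : MvPolynomial (Fin N) R} {d : ℕ} (hq : q.IsHomogeneous d) (hd : d ≤ 1) :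
    lap q = 0 := by
  refine Finset.sum_eq_zero fun j _ => ?_
  interval_cases d
  · rw [pderiv_homog_zero hq j, map_zero]
  · exact pderiv_homog_zero (pderiv_isHomog hq j) j

lemma lam_homog_zero [Algebra ℚ R] (hN : 2 ≤ N)
    (lam : MvPolynomial (Fin N) R →ₗ[R] R)
    (hrot : ∀ (j k : Fin N), j ≠ k → ∀ p, lam (rot j k p) = 0)
    {q : MvPolynomial (Fin N) R} {d : ℕ} (hq : q.IsHomogeneous d) (hd : 1 ≤ d)
    (hlapq : lap q = 0) : lam q = 0 := by
  have hsum : ∑ j, ∑ k, rot j k (X k * pderiv j q)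
      = (N * d + (d - 1) * d) • q - d • q - XX R N * lap q := by
    rw [Finset.sum_congr rfl fun j _ => rot_sum j (pderiv j q)]
    have heuler : ∀ j : Fin N, X j * (∑ k, X k * pderiv k (pderiv j q))
        = (d - 1) • (X j * pderiv j q) := fun j => by
      rw [euler_homog (pderiv_isHomog hq j), mul_smul_comm]
    simp only [Finset.sum_sub_distrib, Finset.sum_add_distrib, heuler]
    rw [← Finset.smul_sum, ← Finset.smul_sum, euler_homog hq, ← Finset.mul_sum]
    show N • d • q + (d-1) • d • q - d • q - XX R N * lap q = _
    rw [smul_smul, smul_smul, ← add_smul]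
  have hml : lam (∑ j, ∑ k, rot j k (X k * pderiv j q)) = 0 := by
    rw [map_sum]
    refine Finset.sum_eq_zero fun j _ => ?_
    rw [map_sum]
    refine Finset.sum_eq_zero fun k _ => ?_
    rcases eq_or_ne j k with rfl | hjk
    · rw [show rot j j (X j * pderiv j q) = 0 by unfold rot; rw [sub_self], map_zero]
    · exact hrot j k hjk _
  rw [hsum, hlapq, mul_zero, sub_zero, map_sub, map_nsmul, map_nsmul] at hml
  set a := lam q with ha
  have key : ((N * d + (d - 1) * d - d : ℕ) : R) * a = 0 := by
    have hle : d ≤ N * d + (d - 1) * d := le_add_right (Nat.le_mul_of_pos_left d (by omega))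
    rw [Nat.cast_sub hle, sub_mul]
    have h1 : ((N * d + (d - 1) * d : ℕ) : R) * a = (d : R) * a := by
      have := sub_eq_zero.mp hml
      rwa [nsmul_eq_mul, nsmul_eq_mul] at this
    rw [h1, sub_self]
  have hpos : 0 < N * d + (d - 1) * d - d := by
    have h2 : 2 * d ≤ N * d := Nat.mul_le_mul_right d hN
    omega
  have hu : IsUnit ((N * d + (d - 1) * d - d : ℕ) : R) := by
    rw [show ((N * d + (d - 1) * d - d : ℕ) : R)
        = algebraMap ℚ R ((N * d + (d - 1) * d - d : ℕ) : ℚ) by rw [map_natCast]]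
    exact (isUnit_iff_ne_zero.mpr (Nat.cast_ne_zero.mpr hpos.ne')).map (algebraMap ℚ R)
  exact (hu.mul_right_eq_zero).mp key

end Aux

/-- the normalized spherical mean of a harmonic polynomial is its
constant coefficient (its value at the origin). -/
theorem stmt16 {R : Type*} [CommRing R] [Algebra ℚ R] {N : ℕ} (hN : 2 ≤ N)
    (lam : MvPolynomial (Fin N) R →ₗ[R] R)
    (hrot : ∀ (j k : Fin N), j ≠ k → ∀ p, lam (rot j k p) = 0)
    (hone : ∀ n : ℕ, lam (XX R N ^ n) = 1)
    (p : MvPolynomial (Fin N) R) (hharm : lap p = 0) :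
    lam p = constantCoeff p := by
  classical
  set D := p.totalDegree with hD
  have hdecomp : ∑ i ∈ Finset.range (D + 1), homogeneousComponent i p = p :=
    sum_homogeneousComponent p
  -- each homogeneous component is harmonic
  have hlapq : ∀ i, lap (homogeneousComponent i p) = 0 := by
    intro i
    rcases le_or_gt i 1 with hi | hi
    · exact lap_lowdeg (homogeneousComponent_isHomogeneous i p) hi
    · by_cases hiD : i ∈ Finset.range (D + 1)
      · have h0 : ∑ i' ∈ Finset.range (D + 1), lap (homogeneousComponent i' p) = 0 := by
          rw [← lap_sum, hdecomp, hharm]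
        have h1 := congrArg (homogeneousComponent (i - 2)) h0
        rw [map_sum, map_zero] at h1
        rw [← h1]
        symm
        refine Finset.sum_eq_single_of_mem i hiD (fun i' _ hne => ?_) |>.trans ?_
        · rcases le_or_gt i' 1 with hi' | hi'
          · rw [lap_lowdeg (homogeneousComponent_isHomogeneous i' p) hi', map_zero]
          · rw [homogeneousComponent_of_mem
              ((mem_homogeneousSubmodule _ _).mpr
                (lap_homog (homogeneousComponent_isHomogeneous i' p))),
              if_neg (show ¬(i - 2 = i' - 2) by omega)]
        · rw [homogeneousComponent_of_mem
              ((mem_homogeneousSubmodule _ _).mpr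
                (lap_homog (homogeneousComponent_isHomogeneous i p))),
              if_pos rfl]
      · rw [Finset.mem_range, not_lt] at hiD
        rw [homogeneousComponent_eq_zero _ _ (by omega)]
        unfold lap
        simp
  -- lam kills components of positive degree
  have hlam0 : ∀ i, 1 ≤ i → lam (homogeneousComponent i p) = 0 := fun i hi =>
    lam_homog_zero hN lam hrot (homogeneousComponent_isHomogeneous i p) hi (hlapq i)
  have hlam1 : lam 1 = 1 := by have := hone 0; rwa [pow_zero] at this
  calc lam p = lam (∑ i ∈ Finset.range (D + 1), homogeneousComponent i p) := by rw [hdecomp]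
    _ = ∑ i ∈ Finset.range (D + 1), lam (homogeneousComponent i p) := map_sum _ _ _
    _ = lam (homogeneousComponent 0 p) :=
        Finset.sum_eq_single_of_mem 0 (Finset.mem_range.mpr (by omega))
          (fun i _ hne => hlam0 i (by omega))
    _ = constantCoeff p := by
        rw [homogeneousComponent_zero, show C (coeff 0 p) = (coeff 0 p) • (1 : MvPolynomial (Fin N) R) by
          rw [smul_eq_C_mul, mul_one], map_smul, hlam1, smul_eq_mul, mul_one]
        rfl
end

section
/- Suppose R contains ℚ (R is a ℚ-algebra) and let λ : R[X_1,…,X_N] → R be an R-linear map such that λ(M_{jk}(p)) = 0 for all pairs of distinct indices j, k ∈ {1,…,N} and all p, and λ((X·X)^n) = 1 for every integer n ≥ 0. If p ∈ R[X_1,…,X_N] is homogeneous of degree d, then (N + d − 1)·λ(X_1·p) = λ(∂p/∂X_1). -/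
open MvPolynomial

namespace Stmt18Aux

variable {R : Type*} [CommRing R] {N : ℕ}

lemma degree_univ (v : Fin N →₀ ℕ) : v.degree = ∑ j, v j :=
  Finset.sum_subset (Finset.subset_univ _)
    (fun i _ hi => Finsupp.notMem_support_iff.mp hi)

lemma homog_degree {p : MvPolynomial (Fin N) R} {d : ℕ} (hp : p.IsHomogeneous d)
    {v : Fin N →₀ ℕ} (hv : coeff v p ≠ 0) : v.degree = d := by
  by_contra h
  exact hv (hp.coeff_eq_zero h)

lemma X_mul_pderiv_monomial (j : Fin N) (u : Fin N →₀ ℕ) (a : R) :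
    X j * pderiv j (monomial u a) = u j • monomial u a := by
  rw [pderiv_monomial]
  rcases Nat.eq_zero_or_pos (u j) with h | h
  · simp [h]
  · have huj : Finsupp.single j 1 + (u - Finsupp.single j 1) = u := by
      ext i
      simp only [Finsupp.add_apply, Finsupp.tsub_apply, Finsupp.single_apply]
      rcases eq_or_ne j i with rfl | hne
      · simp; omega
      · simp [hne]
    rw [X, monomial_mul, huj, smul_monomial]
    congr 1
    rw [one_mul, nsmul_eq_mul, mul_comm]

lemma euler {p : MvPolynomial (Fin N) R} {d : ℕ} (hp : p.IsHomogeneous d) :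
    ∑ j, X j * pderiv j p = (d : MvPolynomial (Fin N) R) * p := by
  conv_lhs => rw [p.as_sum]
  conv_rhs => rw [p.as_sum]
  simp only [map_sum, Finset.mul_sum]
  rw [Finset.sum_comm]
  refine Finset.sum_congr rfl fun v hv => ?_
  calc ∑ j, X j * pderiv j (monomial v (coeff v p))
      = ∑ j, v j • monomial v (coeff v p) := by
        exact Finset.sum_congr rfl fun j _ => X_mul_pderiv_monomial j v _
    _ = (∑ j, v j) • monomial v (coeff v p) := by rw [Finset.sum_smul]
    _ = (d : MvPolynomial (Fin N) R) * monomial v (coeff v p) := by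
        rw [← degree_univ, homog_degree hp (mem_support_iff.mp hv), nsmul_eq_mul]

lemma pderiv_homog {p : MvPolynomial (Fin N) R} {d : ℕ} (hp : p.IsHomogeneous d)
    (j : Fin N) : (pderiv j p).IsHomogeneous (d - 1) := by
  conv_lhs => rw [p.as_sum]
  rw [map_sum]
  apply IsHomogeneous.sum
  intro v hv
  rw [pderiv_monomial]
  rcases Nat.eq_zero_or_pos (v j) with h | h
  · rw [h]
    simpa using isHomogeneous_zero (Fin N) R (d - 1)
  · apply isHomogeneous_monomial
    have hdeg : v.degree = d := homog_degree hp (mem_support_iff.mp hv)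
    rw [degree_univ] at hdeg ⊢
    have key : ∀ i, ((v - Finsupp.single j 1 : Fin N →₀ ℕ)) i + Finsupp.single j 1 i = v i := by
      intro i
      rw [Finsupp.tsub_apply]
      rcases eq_or_ne j i with rfl | hne
      · simp
        omega
      · simp [Finsupp.single_apply, hne]
    have hsum : (∑ i, ((v - Finsupp.single j 1 : Fin N →₀ ℕ)) i) + ∑ i, Finsupp.single j 1 i
        = ∑ i, v i := by
      rw [← Finset.sum_add_distrib]
      exact Finset.sum_congr rfl fun i _ => key i
    have hsingle : ∑ i : Fin N, Finsupp.single j 1 i = 1 := by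
      simp [Finsupp.single_apply]
    omega

lemma XX_homog : (XX R N).IsHomogeneous 2 := by
  rw [XX]
  exact IsHomogeneous.sum _ _ _ fun j _ => isHomogeneous_X_pow j 2

lemma pderiv_XX (k : Fin N) : pderiv k (XX R N) = 2 * X k := by
  rw [XX, map_sum, Finset.sum_eq_single k]
  · rw [pderiv_pow, pderiv_X_self, pow_one]
    push_cast
    ring
  · intro j _ hj
    rw [pderiv_pow, pderiv_X_of_ne hj]
    ring
  · simp

lemma nsmul_cancel {M : Type*} [AddCommGroup M] [Module ℚ M] {c : ℕ} (hc : c ≠ 0)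
    {x y : M} (h : c • x = c • y) : x = y := by
  have h' : (c : ℚ) • x = (c : ℚ) • y := by
    rw [Nat.cast_smul_eq_nsmul, Nat.cast_smul_eq_nsmul]; exact h
  have hc' : (c : ℚ) ≠ 0 := by exact_mod_cast hc
  calc x = (c : ℚ)⁻¹ • ((c : ℚ) • x) := (inv_smul_smul₀ hc' x).symm
    _ = (c : ℚ)⁻¹ • ((c : ℚ) • y) := by rw [h']
    _ = y := inv_smul_smul₀ hc' y

section Lam

variable [Algebra ℚ R] (hN : 2 ≤ N) (lam : MvPolynomial (Fin N) R →ₗ[R] R)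
  (hrot : ∀ (j k : Fin N), j ≠ k → ∀ p, lam (rot j k p) = 0)

include hN hrot

lemma keyA {e : ℕ} {r : MvPolynomial (Fin N) R} (hr : r.IsHomogeneous e) (k : Fin N) :
    lam (XX R N * pderiv k r) = (N - 1 + e) • lam (X k * r) := by
  have hterm : ∀ j ∈ Finset.univ.erase k, rot j k (X j * r)
      = X j ^ 2 * pderiv k r - X k * r - X k * (X j * pderiv j r) := by
    intro j hj
    have hjk : j ≠ k := Finset.ne_of_mem_erase hj
    rw [rot, pderiv_mul, pderiv_mul, pderiv_X_of_ne hjk, pderiv_X_self]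
    ring
  have hsum : ∑ j ∈ Finset.univ.erase k, rot j k (X j * r)
      = XX R N * pderiv k r
        - ((N - 1 + e : ℕ) : MvPolynomial (Fin N) R) * (X k * r) := by
    have hXX : (∑ j, X j ^ 2 : MvPolynomial (Fin N) R) = XX R N := rfl
    rw [Finset.sum_congr rfl hterm, Finset.sum_sub_distrib, Finset.sum_sub_distrib]
    have e1 : ∑ j ∈ Finset.univ.erase k, X j ^ 2 * pderiv k r
        = (XX R N - X k ^ 2) * pderiv k r := by
      rw [← Finset.sum_mul, Finset.sum_erase_eq_sub (Finset.mem_univ k), hXX]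
    have e2 : ∑ _j ∈ Finset.univ.erase k, X k * r
        = ((N - 1 : ℕ) : MvPolynomial (Fin N) R) * (X k * r) := by
      rw [Finset.sum_const, Finset.card_erase_of_mem (Finset.mem_univ k),
        Finset.card_univ, Fintype.card_fin, nsmul_eq_mul]
    have e3 : ∑ j ∈ Finset.univ.erase k, X k * (X j * pderiv j r)
        = X k * ((e : MvPolynomial (Fin N) R) * r - X k * pderiv k r) := by
      rw [← Finset.mul_sum, Finset.sum_erase_eq_sub (Finset.mem_univ k), euler hr]
    rw [e1, e2, e3, Nat.cast_add]
    ring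
  have h0 : lam (∑ j ∈ Finset.univ.erase k, rot j k (X j * r)) = 0 := by
    rw [map_sum]
    exact Finset.sum_eq_zero fun j hj => hrot j k (Finset.ne_of_mem_erase hj) _
  rw [hsum, map_sub, ← nsmul_eq_mul, map_nsmul, sub_eq_zero] at h0
  exact h0

lemma keyB {e m : ℕ} {s : MvPolynomial (Fin N) R} (hs : s.IsHomogeneous e) (he : 1 ≤ e) :
    lam (XX R N ^ (m + 1) * lap s) = (e * (N + e - 2)) • lam (XX R N ^ m * s) := by
  have hks : ∀ k : Fin N, lam (XX R N ^ (m + 1) * pderiv k (pderiv k s))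
      = (N + e - 2) • lam (XX R N ^ m * (X k * pderiv k s)) := by
    intro k
    have hrh : (XX R N ^ m * pderiv k s).IsHomogeneous (2 * m + (e - 1)) :=
      (XX_homog.pow m).mul (pderiv_homog hs k)
    have hA := keyA hN lam hrot hrh k
    have hd : XX R N * pderiv k (XX R N ^ m * pderiv k s)
        = XX R N ^ (m + 1) * pderiv k (pderiv k s)
          + (2 * m) • (XX R N ^ m * (X k * pderiv k s)) := by
      rw [pderiv_mul, pderiv_pow, pderiv_XX, nsmul_eq_mul]
      cases m with
      | zero => push_cast; ring
      | succ m' =>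
        rw [show m' + 1 - 1 = m' from rfl]
        push_cast
        ring
    have hXkr : X k * (XX R N ^ m * pderiv k s) = XX R N ^ m * (X k * pderiv k s) := by
      ring
    rw [hXkr] at hA
    rw [hd, map_add, map_nsmul] at hA
    rw [show N - 1 + (2 * m + (e - 1)) = (N + e - 2) + 2 * m from by omega, add_smul] at hA
    exact add_right_cancel hA
  have hlapsum : XX R N ^ (m + 1) * lap s = ∑ k, XX R N ^ (m + 1) * pderiv k (pderiv k s) := by
    rw [lap, Finset.mul_sum]
  rw [hlapsum, map_sum]
  rw [Finset.sum_congr rfl fun k _ => hks k, ← Finset.smul_sum, ← map_sum]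
  rw [show (∑ k, XX R N ^ m * (X k * pderiv k s)) = XX R N ^ m * ∑ k, X k * pderiv k s from by
    rw [Finset.mul_sum]]
  rw [euler hs, show XX R N ^ m * ((e : MvPolynomial (Fin N) R) * s)
    = (e : ℕ) • (XX R N ^ m * s) from by rw [nsmul_eq_mul]; push_cast; ring]
  rw [map_nsmul, smul_smul, mul_comm]

lemma keyC (hone : ∀ n : ℕ, lam (XX R N ^ n) = 1) :
    ∀ e m : ℕ, ∀ s : MvPolynomial (Fin N) R, s.IsHomogeneous e →
      lam (XX R N ^ (m + 1) * s) = lam (XX R N ^ m * s) := by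
  intro e
  induction e using Nat.strong_induction_on with
  | _ e IH =>
    intro m s hs
    rcases Nat.eq_zero_or_pos e with rfl | he
    · have hsC : s = C (coeff 0 s) := by
        have h1 := homogeneousComponent_of_mem (m := 0)
          ((mem_homogeneousSubmodule 0 s).mpr hs)
        rw [if_pos rfl] at h1
        exact h1.symm.trans (homogeneousComponent_zero s)
      rw [hsC]
      have hcomm : ∀ n : ℕ, XX R N ^ n * C (coeff 0 s) = coeff 0 s • XX R N ^ n := by
        intro n
        rw [mul_comm, C_mul']
      rw [hcomm, hcomm, map_smul, map_smul, hone, hone]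
    · have hlap : (lap s).IsHomogeneous (e - 2) := by
        rw [lap]
        apply IsHomogeneous.sum
        intro k _
        have h2 := pderiv_homog (pderiv_homog hs k) k
        rwa [show e - 1 - 1 = e - 2 from by omega] at h2
      have h1 := keyB hN lam hrot hs he (m := m)
      have h2 := keyB hN lam hrot hs he (m := m + 1)
      have h3 := IH (e - 2) (by omega) (m + 1) (lap s) hlap
      rw [h1, h2] at h3
      have hc : (e * (N + e - 2) : ℕ) ≠ 0 := by
        have : N + e - 2 ≠ 0 := by omega
        exact Nat.mul_ne_zero (by omega) this
      exact nsmul_cancel hc h3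

end Lam

end Stmt18Aux

open Stmt18Aux in
/-- for `p` homogeneous of degree `d`,
`(N + d − 1)·λ(X_1·p) = λ(∂p/∂X_1)`. -/
theorem stmt18 {R : Type*} [CommRing R] [Algebra ℚ R] {N : ℕ} (hN : 2 ≤ N)
    (lam : MvPolynomial (Fin N) R →ₗ[R] R)
    (hrot : ∀ (j k : Fin N), j ≠ k → ∀ p, lam (rot j k p) = 0)
    (hone : ∀ n : ℕ, lam (XX R N ^ n) = 1)
    (d : ℕ) (p : MvPolynomial (Fin N) R) (hp : p.IsHomogeneous d) :
    (N + d - 1) • lam (X (⟨0, by omega⟩ : Fin N) * p) =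
      lam (pderiv (⟨0, by omega⟩ : Fin N) p) := by
  have hA := keyA hN lam hrot hp (⟨0, by omega⟩ : Fin N)
  have hC := keyC hN lam hrot hone (d - 1) 0 (pderiv (⟨0, by omega⟩ : Fin N) p)
    (pderiv_homog hp _)
  rw [pow_one, pow_zero, one_mul] at hC
  rw [show N + d - 1 = N - 1 + d from by omega, ← hA, hC]
end
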